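/- Let A and B be finite sets with |A| ≤ |B|, and consider the uniform probability measure on the set ℐ(A,B) of injections from A to B. Let 𝒳 be a finite set of canonical events for ℐ(A,B), and let D' be the intersection graph for 𝒳, i.e., the graph on vertex set 𝒳 with an edge between two events X(A'_1,B'_1,π_1) and X(A'_2,B'_2,π_2) exactly when (A'_1 ∩ A'_2) ∪ (B'_1 ∩ B'_2) ≠ ∅. Then any two canonical events that conflict are adjacent in D' (so D' is a supergraph of the canonical dependency graph), and consequently D' is a negative dependency graph for 𝒳. -/

import Mathlib

open Finset Nat

/-- The probability of a set of injections `S ⊆ ℐ(A,B)` under the uniform measure on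
`ℐ(A,B) = A ↪ B`. -/
noncomputable def uniformProb {A B : Type*} (S : Set (A ↪ B)) : ℝ :=
  S.ncard / Nat.card (A ↪ B)



lemma extend_injOn {A B : Type*} [Fintype A] [Fintype B] [DecidableEq A] [DecidableEq B]
    (hAB : Fintype.card A ≤ Fintype.card B) (S : Finset A) (f : A → B)
    (hf : Set.InjOn f S) : ∃ σ : A ↪ B, ∀ a ∈ S, σ a = f a := by
  have hcard : Fintype.card {a // a ∈ Sᶜ} ≤ Fintype.card {b // b ∈ (S.image f)ᶜ} := by
    simp only [Fintype.card_coe, Finset.card_compl, Finset.card_image_of_injOn hf]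
    exact Nat.sub_le_sub_right hAB _
  obtain ⟨e⟩ := Function.Embedding.nonempty_of_card_le hcard
  have hmem : ∀ a : A, a ∉ S → a ∈ Sᶜ := fun a ha => Finset.mem_compl.2 ha
  refine ⟨⟨fun a => if h : a ∈ S then f a else (e ⟨a, hmem a h⟩ : {b // b ∈ (S.image f)ᶜ}), ?_⟩,
    fun a ha => dif_pos ha⟩
  intro a a' h
  dsimp only at h
  by_cases ha : a ∈ S <;> by_cases ha' : a' ∈ S
  · rw [dif_pos ha, dif_pos ha'] at h; exact hf ha ha' h
  · rw [dif_pos ha, dif_neg ha'] at h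
    exact absurd (h ▸ Finset.mem_image_of_mem f ha) (Finset.mem_compl.1 (e ⟨a', hmem a' ha'⟩).2)
  · rw [dif_neg ha, dif_pos ha'] at h
    exact absurd (h ▸ Finset.mem_image_of_mem f ha') (Finset.mem_compl.1 (e ⟨a, hmem a ha⟩).2)
  · rw [dif_neg ha, dif_neg ha'] at h
    simpa using e.injective (Subtype.ext h)



lemma card_perm_agree {A B : Type*} [Fintype A] [Fintype B] [DecidableEq A] [DecidableEq B]
    (S : Finset A) (u v : A → B) (hu : Set.InjOn u S) (hv : Set.InjOn v S) :
    Nat.card {g : Equiv.Perm B // ∀ a ∈ S, g (u a) = v a}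
      = (Fintype.card B - S.card)! := by
  classical
  set su : Set B := u '' ↑S with hsu
  set tv : Set B := v '' ↑S with htv
  set e₀ : su ≃ tv :=
    (Equiv.Set.imageOfInjOn u ↑S hu).symm.trans (Equiv.Set.imageOfInjOn v ↑S hv) with he₀
  have key : ∀ a (ha : a ∈ S), e₀ ⟨u a, ⟨a, ha, rfl⟩⟩ = ⟨v a, ⟨a, ha, rfl⟩⟩ := by
    intro a ha
    have h2 : (Equiv.Set.imageOfInjOn u ↑S hu).symm ⟨u a, ⟨a, ha, rfl⟩⟩ = ⟨a, ha⟩ := by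
      rw [Equiv.symm_apply_eq]; rfl
    rw [he₀, Equiv.trans_apply, h2]; rfl
  have equiv1 : {g : Equiv.Perm B // ∀ a ∈ S, g (u a) = v a} ≃ {e : B ≃ B // ∀ x : su, e x = e₀ x} :=
    Equiv.subtypeEquivRight (by
      intro g
      constructor
      · rintro hg ⟨x, a, ha, rfl⟩
        show g (u a) = ↑(e₀ ⟨u a, _⟩)
        rw [key a ha]; exact hg a ha
      · intro hg a ha
        have h := hg ⟨u a, ⟨a, ha, rfl⟩⟩
        rw [key a ha] at h; exact h)
  have hsu_card : Fintype.card ↥su = S.card := by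
    rw [← Nat.card_eq_fintype_card, Nat.card_coe_set_eq, Set.ncard_image_of_injOn hu,
      Set.ncard_coe_finset]
  have htv_card : Fintype.card ↥tv = S.card := by
    rw [← Nat.card_eq_fintype_card, Nat.card_coe_set_eq, Set.ncard_image_of_injOn hv,
      Set.ncard_coe_finset]
  have hc1 : Fintype.card ↥(suᶜ) = Fintype.card B - S.card := by
    rw [Fintype.card_compl_set, hsu_card]
  have hcc : Fintype.card ↥(suᶜ) = Fintype.card ↥(tvᶜ) := by
    rw [Fintype.card_compl_set, Fintype.card_compl_set, hsu_card, htv_card]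
  rw [Nat.card_congr (equiv1.trans (Equiv.Set.compl e₀)), Nat.card_eq_fintype_card,
    Fintype.card_equiv (Fintype.equivOfCardEq hcc), hc1]



lemma cnt_step {A B : Type*} [Fintype A] [Fintype B] [DecidableEq A] [DecidableEq B]
    (Si : Finset A) (FF : Finset (A ↪ B)) (tgt : Set B)
    (hclosed : ∀ σ ∈ FF, ∀ b c : B, b ∉ tgt → (∃ a0 ∈ Si, σ a0 = b) →
      σ.trans (Equiv.swap b c).toEmbedding ∈ FF)
    (ρ₀ : A → B) (a₀ : A) (ha₀ : a₀ ∈ Si) (b c : B)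
    (hb : ρ₀ a₀ = b) (hbt : b ∉ tgt) :
    (FF.filter fun σ => ∀ a ∈ Si, σ a = ρ₀ a).card ≤
      (FF.filter fun σ => ∀ a ∈ Si, σ a = Equiv.swap b c (ρ₀ a)).card := by
  apply Finset.card_le_card_of_injOn (fun σ => σ.trans (Equiv.swap b c).toEmbedding)
  · intro σ hσ
    rw [Finset.mem_coe, Finset.mem_filter] at hσ ⊢
    obtain ⟨h1, h2⟩ := hσ
    refine ⟨hclosed σ h1 b c hbt ⟨a₀, ha₀, by rw [h2 a₀ ha₀, hb]⟩, ?_⟩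
    intro a ha
    simp only [Function.Embedding.trans_apply, Equiv.coe_toEmbedding]
    rw [h2 a ha]
  · intro σ _ σ' _ h
    ext a
    have := congrArg (fun τ : A ↪ B => (Equiv.swap b c).symm (τ a)) h
    simpa using this

lemma cnt_chain {A B : Type*} [Fintype A] [Fintype B] [DecidableEq A] [DecidableEq B]
    (Si : Finset A) (FF : Finset (A ↪ B)) (tgt : Set B)
    (hclosed : ∀ σ ∈ FF, ∀ b c : B, b ∉ tgt → (∃ a0 ∈ Si, σ a0 = b) →
      σ.trans (Equiv.swap b c).toEmbedding ∈ FF)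
    (ρ₁ : A → B) (h₁ : Set.InjOn ρ₁ Si) :
    ∀ k (ρ₀ : A → B), (Si.filter fun a => ρ₀ a ≠ ρ₁ a).card ≤ k → Set.InjOn ρ₀ Si →
      (∀ a ∈ Si, ρ₀ a ≠ ρ₁ a → ρ₀ a ∉ tgt) →
      (FF.filter fun σ => ∀ a ∈ Si, σ a = ρ₀ a).card ≤
        (FF.filter fun σ => ∀ a ∈ Si, σ a = ρ₁ a).card := by
  have base : ∀ (ρ₀ : A → B), (∀ a ∈ Si, ρ₀ a = ρ₁ a) →
      (FF.filter fun σ => ∀ a ∈ Si, σ a = ρ₀ a).card =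
        (FF.filter fun σ => ∀ a ∈ Si, σ a = ρ₁ a).card := by
    intro ρ₀ hag
    congr 1
    apply Finset.filter_congr
    intro σ _
    constructor
    · intro h a ha; rw [h a ha, hag a ha]
    · intro h a ha; rw [h a ha, hag a ha]
  intro k
  induction k with
  | zero =>
    intro ρ₀ hk h₀ hav
    rw [Nat.le_zero, Finset.card_eq_zero] at hk
    refine le_of_eq (base ρ₀ ?_)
    intro a ha
    by_contra hne
    have : a ∈ Si.filter fun a => ρ₀ a ≠ ρ₁ a := Finset.mem_filter.2 ⟨ha, hne⟩
    rw [hk] at this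
    exact absurd this (Finset.notMem_empty a)
  | succ k ih =>
    intro ρ₀ hk h₀ hav
    by_cases hle : (Si.filter fun a => ρ₀ a ≠ ρ₁ a).card ≤ k
    · exact ih ρ₀ hle h₀ hav
    have hpos : 0 < (Si.filter fun a => ρ₀ a ≠ ρ₁ a).card := by omega
    obtain ⟨a₀, ha₀f⟩ := Finset.card_pos.1 hpos
    obtain ⟨ha₀, hne₀⟩ := Finset.mem_filter.1 ha₀f
    set b := ρ₀ a₀ with hbdef
    set c := ρ₁ a₀ with hcdef
    have hbt : b ∉ tgt := hav a₀ ha₀ hne₀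
    set ρ' : A → B := fun a => Equiv.swap b c (ρ₀ a) with hρ'
    have hsub : (Si.filter fun a => ρ' a ≠ ρ₁ a) ⊆
        (Si.filter fun a => ρ₀ a ≠ ρ₁ a).erase a₀ := by
      intro a haf
      obtain ⟨ha, hne⟩ := Finset.mem_filter.1 haf
      have hane : a ≠ a₀ := by
        rintro rfl
        exact hne (by rw [hρ']; simp [Equiv.swap_apply_left, ← hbdef, hcdef])
      refine Finset.mem_erase.2 ⟨hane, Finset.mem_filter.2 ⟨ha, ?_⟩⟩
      intro heq
      apply hne
      rw [hρ']
      simp only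
      rw [Equiv.swap_apply_of_ne_of_ne, heq]
      · intro hbb; exact hane (h₀ ha ha₀ hbb)
      · intro hcc; exact hane (h₁ ha ha₀ (by rw [← heq, hcc]))
    have hfacts : ∀ a ∈ Si, ρ' a ≠ ρ₁ a → a ≠ a₀ ∧ ρ₀ a ≠ ρ₁ a := by
      intro a ha hne
      have := hsub (Finset.mem_filter.2 ⟨ha, hne⟩)
      obtain ⟨h1, h2⟩ := Finset.mem_erase.1 this
      exact ⟨h1, (Finset.mem_filter.1 h2).2⟩
    calc (FF.filter fun σ => ∀ a ∈ Si, σ a = ρ₀ a).card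
        ≤ (FF.filter fun σ => ∀ a ∈ Si, σ a = ρ' a).card :=
          cnt_step Si FF tgt hclosed ρ₀ a₀ ha₀ b c rfl hbt
      _ ≤ (FF.filter fun σ => ∀ a ∈ Si, σ a = ρ₁ a).card := by
          apply ih ρ'
          · calc (Si.filter fun a => ρ' a ≠ ρ₁ a).card
                ≤ ((Si.filter fun a => ρ₀ a ≠ ρ₁ a).erase a₀).card := Finset.card_le_card hsub
              _ ≤ k := by
                  rw [Finset.card_erase_of_mem ha₀f]
                  omega
          · intro x hx y hy h
            exact h₀ hx hy ((Equiv.swap b c).injective h)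
          · intro a ha hne
            obtain ⟨hane, hne0⟩ := hfacts a ha hne
            rw [hρ']
            simp only
            by_cases hc : ρ₀ a = c
            · rw [hc, Equiv.swap_apply_right]; exact hbt
            · rw [Equiv.swap_apply_of_ne_of_ne _ hc]
              · exact hav a ha hne0
              · intro hbb; exact hane (h₀ ha ha₀ hbb)

/-- Let `A`, `B` be finite sets with `|A| ≤ |B|` and let
`E i = {σ ∈ ℐ(A,B) : σ agrees with π i on S i}` (for `i ∈ [t]`) be canonical events for the
uniform measure on the injections `ℐ(A,B)`, where each `π i` is injective on `S i`.  Let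
`D'` be the intersection graph: two events are adjacent iff they are distinct and their
domains `S i`, `S j` intersect or their images `π i '' S i`, `π j '' S j` intersect.  Then
every two distinct conflicting canonical events are adjacent in `D'` (so `D'` is a
supergraph of the canonical dependency graph), and `D'` is a negative dependency graph. -/
theorem intersection_graph_is_negative_dependency_graph
    {A B : Type*} [Fintype A] [Fintype B] [DecidableEq A] [DecidableEq B]
    (hAB : Fintype.card A ≤ Fintype.card B)
    {t : ℕ} (S : Fin t → Finset A) (π : Fin t → A → B)
    (hπ : ∀ i, Set.InjOn (π i) (S i))
    (E : Fin t → Set (A ↪ B))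
    (hE : ∀ i, E i = {σ : A ↪ B | ∀ a ∈ S i, σ a = π i a})
    (D' : SimpleGraph (Fin t))
    (hD' : ∀ i j, D'.Adj i j ↔ i ≠ j ∧
      ((S i ∩ S j).Nonempty ∨ ((S i).image (π i) ∩ (S j).image (π j)).Nonempty)) :
    (∀ i j, i ≠ j → E i ∩ E j = ∅ → D'.Adj i j) ∧
    (∀ (i : Fin t) (Z : Finset (Fin t)), (∀ j ∈ Z, j ≠ i ∧ ¬ D'.Adj i j) →
      uniformProb (E i ∩ ⋂ j ∈ Z, (E j)ᶜ) ≤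
        uniformProb (E i) * uniformProb (⋂ j ∈ Z, (E j)ᶜ)) := by
  constructor
  · intro i j hij hcap
    by_contra hnadj
    rw [hD'] at hnadj
    push_neg at hnadj
    obtain ⟨hdom, him⟩ := hnadj hij
    classical
    set f : A → B := fun a => if a ∈ S i then π i a else π j a with hf
    have hinj : Set.InjOn f ↑(S i ∪ S j) := by
      intro x hx y hy hxy
      simp only [Finset.coe_union, Set.mem_union, Finset.mem_coe] at hx hy
      have himx : ∀ u v : A, u ∈ S i → v ∈ S j → π i u ≠ π j v := by
        intro u v hu hv heq
        have hm : π i u ∈ (S i).image (π i) ∩ (S j).image (π j) :=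
          Finset.mem_inter.2 ⟨Finset.mem_image_of_mem _ hu, heq ▸ Finset.mem_image_of_mem _ hv⟩
        rw [him] at hm
        exact absurd hm (Finset.notMem_empty _)
      by_cases hxi : x ∈ S i <;> by_cases hyi : y ∈ S i
      · rw [hf] at hxy
        simp only [if_pos hxi, if_pos hyi] at hxy
        exact hπ i hxi hyi hxy
      · have hyj : y ∈ S j := hy.resolve_left hyi
        rw [hf] at hxy
        simp only [if_pos hxi, if_neg hyi] at hxy
        exact absurd hxy (himx x y hxi hyj)
      · have hxj : x ∈ S j := hx.resolve_left hxi
        rw [hf] at hxy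
        simp only [if_neg hxi, if_pos hyi] at hxy
        exact absurd hxy.symm (himx y x hyi hxj)
      · have hxj : x ∈ S j := hx.resolve_left hxi
        have hyj : y ∈ S j := hy.resolve_left hyi
        rw [hf] at hxy
        simp only [if_neg hxi, if_neg hyi] at hxy
        exact hπ j hxj hyj hxy
    obtain ⟨σ, hσ⟩ := extend_injOn hAB (S i ∪ S j) f hinj
    have hσi : σ ∈ E i := by
      rw [hE]
      intro a ha
      rw [hσ a (Finset.mem_union_left _ ha), hf]
      simp only [if_pos ha]
    have hσj : σ ∈ E j := by
      rw [hE]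
      intro a ha
      have hani : a ∉ S i := by
        intro hai
        have hm : a ∈ S i ∩ S j := Finset.mem_inter.2 ⟨hai, ha⟩
        rw [hdom] at hm
        exact absurd hm (Finset.notMem_empty _)
      rw [hσ a (Finset.mem_union_right _ ha), hf]
      simp only [if_neg hani]
    have hmem : σ ∈ E i ∩ E j := ⟨hσi, hσj⟩
    rw [hcap] at hmem
    exact hmem
  intro i Z hZ
  classical
  set F : Set (A ↪ B) := ⋂ j ∈ Z, (E j)ᶜ with hF
  have hdis : ∀ j ∈ Z, (S i ∩ S j = ∅) ∧ ((S i).image (π i) ∩ (S j).image (π j) = ∅) := by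
    intro j hj
    obtain ⟨hne, hnadj⟩ := hZ j hj
    rw [hD'] at hnadj
    push_neg at hnadj
    obtain ⟨h1, h2⟩ := hnadj (Ne.symm hne)
    exact ⟨h1, h2⟩
  set tgt : Set B := {b | ∃ j ∈ Z, ∃ a ∈ S j, π j a = b} with htgt
  have hπtgt : ∀ a ∈ S i, π i a ∉ tgt := by
    rintro a ha ⟨j, hj, a', ha', heq⟩
    have hmm : π i a ∈ (S i).image (π i) ∩ (S j).image (π j) :=
      Finset.mem_inter.2 ⟨Finset.mem_image_of_mem _ ha, heq ▸ Finset.mem_image_of_mem _ ha'⟩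
    rw [(hdis j hj).2] at hmm
    exact absurd hmm (Finset.notMem_empty _)
  set FF : Finset (A ↪ B) := Finset.univ.filter (fun σ => σ ∈ F) with hFF
  have hmemFF : ∀ σ : A ↪ B, σ ∈ FF ↔ ∀ j ∈ Z, ∃ a ∈ S j, σ a ≠ π j a := by
    intro σ
    rw [hFF]
    simp only [Finset.mem_filter, Finset.mem_univ, true_and, hF, Set.mem_iInter,
      Set.mem_compl_iff, hE, Set.mem_setOf_eq]
    constructor
    · intro h j hj
      have := h j hj
      push_neg at this
      exact this
    · intro h j hj
      push_neg
      exact h j hj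
  have hclosed : ∀ σ ∈ FF, ∀ b c : B, b ∉ tgt → (∃ a0 ∈ S i, σ a0 = b) →
      σ.trans (Equiv.swap b c).toEmbedding ∈ FF := by
    rintro σ hσ b c hbt ⟨a₀, ha₀, hb⟩
    rw [hmemFF] at hσ ⊢
    intro j hj
    obtain ⟨aw, haw, hneq⟩ := hσ j hj
    by_cases h1 : σ aw = b
    · exfalso
      have haa : aw = a₀ := σ.injective (h1.trans hb.symm)
      subst haa
      have : aw ∈ S i ∩ S j := Finset.mem_inter.2 ⟨ha₀, haw⟩
      rw [(hdis j hj).1] at this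
      exact absurd this (Finset.notMem_empty _)
    by_cases h2 : σ aw = c
    · refine ⟨aw, haw, ?_⟩
      simp only [Function.Embedding.trans_apply, Equiv.coe_toEmbedding]
      rw [h2, Equiv.swap_apply_right]
      intro heq
      exact hbt ⟨j, hj, aw, haw, heq.symm⟩
    · refine ⟨aw, haw, ?_⟩
      simp only [Function.Embedding.trans_apply, Equiv.coe_toEmbedding]
      rw [Equiv.swap_apply_of_ne_of_ne h1 h2]
      exact hneq
  have key1 : ∀ g : Equiv.Perm B,
      (FF.filter fun σ => ∀ a ∈ S i, σ a = π i a).card ≤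
        (FF.filter fun σ => ∀ a ∈ S i, σ a = g⁻¹ (π i a)).card := by
    intro g
    exact cnt_chain (S i) FF tgt hclosed (fun a => g⁻¹ (π i a))
      (fun x hx y hy h => hπ i hx hy (g⁻¹.injective h))
      ((S i).filter fun a => π i a ≠ g⁻¹ (π i a)).card (π i) le_rfl (hπ i)
      (fun a ha _ => hπtgt a ha)
  have cardg : ∀ σ : A ↪ B,
      (Finset.univ.filter fun g : Equiv.Perm B => ∀ a ∈ S i, g (σ a) = π i a).card
        = (Fintype.card B - (S i).card)! := by
    intro σ
    have h := card_perm_agree (S i) σ (π i) (σ.injective.injOn) (hπ i)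
    rw [Nat.card_eq_fintype_card, Fintype.card_subtype] at h
    exact h
  have fub1 : ∑ g : Equiv.Perm B,
      (FF.filter fun σ => ∀ a ∈ S i, σ a = g⁻¹ (π i a)).card
      = ∑ σ ∈ FF,
        (Finset.univ.filter fun g : Equiv.Perm B => ∀ a ∈ S i, g (σ a) = π i a).card := by
    simp only [Finset.card_filter]
    rw [Finset.sum_comm]
    refine Finset.sum_congr rfl fun σ _ => Finset.sum_congr rfl fun g _ => ?_
    refine if_congr ?_ rfl rfl
    constructor
    · intro h a ha
      rw [h a ha]
      simp
    · intro h a ha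
      rw [← h a ha]
      simp
  have ineq1 : (FF.filter fun σ => ∀ a ∈ S i, σ a = π i a).card * (Fintype.card B)! ≤
      FF.card * (Fintype.card B - (S i).card)! := by
    calc (FF.filter fun σ => ∀ a ∈ S i, σ a = π i a).card * (Fintype.card B)!
        = ∑ _g : Equiv.Perm B, (FF.filter fun σ => ∀ a ∈ S i, σ a = π i a).card := by
          rw [Finset.sum_const, Finset.card_univ, Fintype.card_perm, smul_eq_mul, mul_comm]
      _ ≤ ∑ g : Equiv.Perm B, (FF.filter fun σ => ∀ a ∈ S i, σ a = g⁻¹ (π i a)).card :=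
          Finset.sum_le_sum fun g _ => key1 g
      _ = ∑ σ ∈ FF, (Fintype.card B - (S i).card)! := by
          rw [fub1]
          exact Finset.sum_congr rfl fun σ _ => cardg σ
      _ = FF.card * (Fintype.card B - (S i).card)! := by
          rw [Finset.sum_const, smul_eq_mul]
  set Ei : Finset (A ↪ B) := Finset.univ.filter (fun σ => σ ∈ E i) with hEi
  have cardEig : ∀ g : Equiv.Perm B,
      (Finset.univ.filter fun σ : A ↪ B => ∀ a ∈ S i, σ a = g⁻¹ (π i a)).card = Ei.card := by
    intro g
    refine Finset.card_bij' (fun σ _ => σ.trans g.toEmbedding)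
      (fun τ _ => τ.trans g.symm.toEmbedding) ?_ ?_ (fun σ _ => by ext a; simp)
      (fun τ _ => by ext a; simp)
    · intro σ hσ
      rw [Finset.mem_filter] at hσ
      rw [hEi, Finset.mem_filter]
      refine ⟨Finset.mem_univ _, ?_⟩
      rw [hE]
      intro a ha
      simp only [Function.Embedding.trans_apply, Equiv.coe_toEmbedding]
      rw [hσ.2 a ha]
      simp
    · intro τ hτ
      rw [hEi, Finset.mem_filter, hE] at hτ
      rw [Finset.mem_filter]
      refine ⟨Finset.mem_univ _, ?_⟩
      intro a ha
      simp only [Function.Embedding.trans_apply, Equiv.coe_toEmbedding]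
      rw [hτ.2 a ha]
      rfl
  have eq2 : Fintype.card (A ↪ B) * (Fintype.card B - (S i).card)! =
      Ei.card * (Fintype.card B)! := by
    have fub2 : ∑ g : Equiv.Perm B,
        (Finset.univ.filter fun σ : A ↪ B => ∀ a ∈ S i, σ a = g⁻¹ (π i a)).card
        = ∑ σ : A ↪ B,
          (Finset.univ.filter fun g : Equiv.Perm B => ∀ a ∈ S i, g (σ a) = π i a).card := by
      simp only [Finset.card_filter]
      rw [Finset.sum_comm]
      refine Finset.sum_congr rfl fun σ _ => Finset.sum_congr rfl fun g _ => ?_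
      refine if_congr ?_ rfl rfl
      constructor
      · intro h a ha
        rw [h a ha]
        simp
      · intro h a ha
        rw [← h a ha]
        simp
    calc Fintype.card (A ↪ B) * (Fintype.card B - (S i).card)!
        = ∑ σ : A ↪ B, (Fintype.card B - (S i).card)! := by
          rw [Finset.sum_const, Finset.card_univ, smul_eq_mul]
      _ = ∑ σ : A ↪ B,
          (Finset.univ.filter fun g : Equiv.Perm B => ∀ a ∈ S i, g (σ a) = π i a).card :=
          (Finset.sum_congr rfl fun σ _ => (cardg σ).symm)
      _ = ∑ g : Equiv.Perm B,
          (Finset.univ.filter fun σ : A ↪ B => ∀ a ∈ S i, σ a = g⁻¹ (π i a)).card := fub2.symm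
      _ = ∑ _g : Equiv.Perm B, Ei.card := Finset.sum_congr rfl fun g _ => cardEig g
      _ = Ei.card * (Fintype.card B)! := by
          rw [Finset.sum_const, Finset.card_univ, Fintype.card_perm, smul_eq_mul, mul_comm]
  have keyN : (FF.filter fun σ => ∀ a ∈ S i, σ a = π i a).card * Fintype.card (A ↪ B) ≤
      Ei.card * FF.card := by
    set a := (FF.filter fun σ => ∀ a ∈ S i, σ a = π i a).card
    set N := Fintype.card (A ↪ B)
    have h3 := Nat.mul_le_mul_right N ineq1
    have h4 : a * N * (Fintype.card B)! ≤ Ei.card * FF.card * (Fintype.card B)! := by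
      calc a * N * (Fintype.card B)! = a * (Fintype.card B)! * N := by ring
        _ ≤ FF.card * (Fintype.card B - (S i).card)! * N := h3
        _ = FF.card * (N * (Fintype.card B - (S i).card)!) := by ring
        _ = FF.card * (Ei.card * (Fintype.card B)!) := by rw [eq2]
        _ = Ei.card * FF.card * (Fintype.card B)! := by ring
    exact Nat.le_of_mul_le_mul_right h4 (Nat.factorial_pos _)
  have hNpos : 0 < Fintype.card (A ↪ B) :=
    Fintype.card_pos_iff.2 (Function.Embedding.nonempty_of_card_le hAB)
  have hid1 : (E i ∩ F).ncard = (FF.filter fun σ => ∀ a ∈ S i, σ a = π i a).card := by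
    rw [show E i ∩ F = ↑(FF.filter fun σ => ∀ a ∈ S i, σ a = π i a) from ?_,
      Set.ncard_coe_finset]
    ext σ
    rw [Finset.mem_coe, Finset.mem_filter, hFF, Finset.mem_filter, Set.mem_inter_iff, hE]
    simp only [Finset.mem_univ, true_and, Set.mem_setOf_eq]
    exact ⟨fun ⟨h1, h2⟩ => ⟨h2, h1⟩, fun ⟨h1, h2⟩ => ⟨h2, h1⟩⟩
  have hid2 : (E i).ncard = Ei.card := by
    rw [show E i = ↑Ei from ?_, Set.ncard_coe_finset]
    ext σ
    rw [Finset.mem_coe, hEi, Finset.mem_filter]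
    simp only [Finset.mem_univ, true_and]
  have hid3 : F.ncard = FF.card := by
    rw [show F = ↑FF from ?_, Set.ncard_coe_finset]
    ext σ
    rw [Finset.mem_coe, hFF, Finset.mem_filter]
    simp only [Finset.mem_univ, true_and]
  simp only [uniformProb]
  rw [hid1, hid2, hid3, Nat.card_eq_fintype_card]
  have hNR : (0:ℝ) < (Fintype.card (A ↪ B) : ℝ) := by exact_mod_cast hNpos
  rw [_root_.div_mul_div_comm, div_le_div_iff₀ hNR (by positivity)]
  have hcast : ((FF.filter fun σ => ∀ a ∈ S i, σ a = π i a).card : ℝ) *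
      (Fintype.card (A ↪ B) : ℝ) ≤ (Ei.card : ℝ) * (FF.card : ℝ) := by
    exact_mod_cast keyN
  nlinarith [hNR, hcast]
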